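/- Let 0 < q < 1. There exist constants C₁, C₂ > 0 and r₀ such that for all r ≥ r₀: C₁ exp{ ln²r/(2 ln(1/q)) + (ln r)/2 } ≤ ∏_{j=0}^∞ (1 + q^j r) ≤ C₂ exp{ ln²r/(2 ln(1/q)) + (ln r)/2 }. -/

import Mathlib

open Finset Filter
set_option maxHeartbeats 1000000

/-- Two-sided asymptotic estimate for ∏_{j=0}^∞ (1 + q^j r). -/
theorem Eq_growth_estimate (q : ℝ) (hq0 : 0 < q) (hq1 : q < 1) :
    ∃ C₁ > 0, ∃ C₂ > 0, ∃ r₀ : ℝ, ∀ r ≥ r₀,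
      C₁ * Real.exp ((Real.log r) ^ 2 / (2 * Real.log (1 / q)) + Real.log r / 2) ≤
        (∏' j : ℕ, (1 + q ^ j * r)) ∧
      (∏' j : ℕ, (1 + q ^ j * r)) ≤
        C₂ * Real.exp ((Real.log r) ^ 2 / (2 * Real.log (1 / q)) + Real.log r / 2) := by
  have hq1' : 1 < 1 / q := by rw [lt_div_iff₀ hq0]; linarith
  set L := Real.log (1 / q) with hLdef
  have hL : 0 < L := Real.log_pos hq1'
  have hqL : q = Real.exp (-L) := by
    rw [hLdef, one_div, Real.log_inv, neg_neg, Real.exp_log hq0]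
  have h1q : (0:ℝ) < 1 - q := by linarith
  refine ⟨q, hq0, Real.exp (q / (1 - q) + 1 / (q * (1 - q))), Real.exp_pos _, 1,
    fun r hr => ?_⟩
  have hr0 : 0 < r := lt_of_lt_of_le one_pos hr
  set x := Real.log r with hxdef
  have hx : 0 ≤ x := Real.log_nonneg hr
  set N := Nat.floor (x / L) with hNdef
  have hN1 : (N : ℝ) ≤ x / L := Nat.floor_le (by positivity)
  have hN2 : x / L < N + 1 := Nat.lt_floor_add_one _
  have h1 : L * N ≤ x := by rw [mul_comm]; exact (le_div_iff₀ hL).mp hN1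
  have h2 : x < L * (N + 1) := by rw [mul_comm]; exact (div_lt_iff₀ hL).mp hN2
  -- factor values as exponentials
  have hfac : ∀ j : ℕ, q ^ j * r = Real.exp (x - L * j) := by
    intro j
    rw [hqL, ← Real.exp_nat_mul, ← Real.exp_log hr0, ← Real.exp_add]
    congr 1
    ring
  have hGauss : ∑ j ∈ range N, (j : ℝ) = N * (N - 1) / 2 := by
    induction N with
    | zero => simp
    | succ n ih => rw [Finset.sum_range_succ, ih]; push_cast; ring
  have hprod_q : ∏ j ∈ range N, (q ^ j * r) =
      Real.exp ((N : ℝ) * x - L * ((N : ℝ) * ((N : ℝ) - 1) / 2)) := by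
    rw [Finset.prod_congr rfl (fun j _ => hfac j), ← Real.exp_sum]
    congr 1
    rw [Finset.sum_sub_distrib, Finset.sum_const, Finset.card_range, ← Finset.mul_sum, hGauss]
    ring
  -- exponent algebra
  have e : x ^ 2 / (2 * L) + x / 2 = (x ^ 2 + L * x) / (2 * L) := by field_simp
  have expA : (N : ℝ) * x - L * ((N : ℝ) * ((N : ℝ) - 1) / 2) ≤ x ^ 2 / (2 * L) + x / 2 := by
    rw [e, le_div_iff₀ (by positivity)]
    nlinarith [sq_nonneg (x - L * N), mul_nonneg hL.le (sub_nonneg.2 h1)]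
  have expB : x ^ 2 / (2 * L) + x / 2 - L ≤
      (N : ℝ) * x - L * ((N : ℝ) * ((N : ℝ) - 1) / 2) := by
    rw [e, sub_le_iff_le_add, div_le_iff₀ (by positivity)]
    nlinarith [sq_nonneg (x - L * N), mul_nonneg hL.le (sub_nonneg.2 h1)]
  -- bounds on q^N * r
  have hqNr1 : 1 ≤ q ^ N * r := by
    rw [hfac N]; exact Real.one_le_exp (by linarith)
  have hqNr2 : q ^ N * r ≤ 1 / q := by
    have h1q' : 1 / q = Real.exp L := by rw [hqL, one_div, ← Real.exp_neg, neg_neg]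
    rw [hfac N, h1q']
    exact Real.exp_le_exp.2 (by linarith)
  -- multipliability
  have hsum0 : Summable (fun j : ℕ => q ^ j * r) :=
    (summable_geometric_of_lt_one hq0.le hq1).mul_right r
  have hslog : Summable (fun j : ℕ => Real.log (1 + q ^ j * r)) := by
    apply Summable.of_nonneg_of_le (fun j => ?_) (fun j => ?_) hsum0
    · exact Real.log_nonneg (by nlinarith [pow_pos hq0 j])
    · have := Real.log_le_sub_one_of_pos (x := 1 + q ^ j * r) (by positivity)
      linarith
  have hM : Multipliable (fun j : ℕ => 1 + q ^ j * r) :=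
    Real.multipliable_of_summable_log (fun j => by positivity) hslog
  have hT : Tendsto (fun n => ∏ j ∈ range n, (1 + q ^ j * r)) atTop
      (nhds (∏' j : ℕ, (1 + q ^ j * r))) := hM.hasProd.tendsto_prod_nat
  have hone : ∀ j : ℕ, (1:ℝ) ≤ 1 + q ^ j * r := fun j =>
    le_add_of_nonneg_right (by positivity)
  constructor
  · -- lower bound
    apply ge_of_tendsto hT
    filter_upwards [eventually_ge_atTop N] with n hn
    calc q * Real.exp (x ^ 2 / (2 * L) + x / 2)
        ≤ Real.exp ((N : ℝ) * x - L * ((N : ℝ) * ((N : ℝ) - 1) / 2)) := by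
          rw [hqL, ← Real.exp_add]
          exact Real.exp_le_exp.2 (by linarith)
      _ = ∏ j ∈ range N, (q ^ j * r) := hprod_q.symm
      _ ≤ ∏ j ∈ range N, (1 + q ^ j * r) :=
          Finset.prod_le_prod (fun j _ => by positivity) (fun j _ => by linarith)
      _ ≤ ∏ j ∈ range n, (1 + q ^ j * r) := by
          rw [← Finset.prod_range_mul_prod_Ico _ hn]
          have h1le : (1:ℝ) ≤ ∏ j ∈ Ico N n, (1 + q ^ j * r) := by
            have := Finset.prod_le_prod (s := Ico N n) (f := fun _ => (1:ℝ))
              (g := fun j => 1 + q ^ j * r) (fun _ _ => zero_le_one) (fun j _ => hone j)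
            simpa using this
          exact le_mul_of_one_le_right
            (Finset.prod_nonneg fun j _ => by positivity) h1le
  · -- upper bound
    apply le_of_tendsto hT
    filter_upwards [eventually_ge_atTop N] with n hn
    rw [← Finset.prod_range_mul_prod_Ico _ hn]
    -- head bound
    have hhead : ∏ j ∈ range N, (1 + q ^ j * r) ≤
        Real.exp ((N : ℝ) * x - L * ((N : ℝ) * ((N : ℝ) - 1) / 2)) *
          Real.exp (q / (1 - q)) := by
      have step : ∀ j ∈ range N, 1 + q ^ j * r ≤ (q ^ j * r) * Real.exp (q ^ (N - j)) := by
        intro j hj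
        have hjN : j ≤ N := le_of_lt (mem_range.1 hj)
        have hpow : q ^ (N - j) * (q ^ j * r) = q ^ N * r := by
          rw [← mul_assoc, ← pow_add, Nat.sub_add_cancel hjN]
        have h1le : 1 ≤ q ^ (N - j) * (q ^ j * r) := hpow ▸ hqNr1
        have hstep1 : 1 + q ^ j * r ≤ (q ^ j * r) * (1 + q ^ (N - j)) := by nlinarith
        have hstep2 : (q ^ j * r) * (1 + q ^ (N - j)) ≤ (q ^ j * r) * Real.exp (q ^ (N - j)) := by
          apply mul_le_mul_of_nonneg_left ?_ (by positivity)
          linarith [Real.add_one_le_exp (q ^ (N - j))]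
        linarith
      calc ∏ j ∈ range N, (1 + q ^ j * r)
          ≤ ∏ j ∈ range N, ((q ^ j * r) * Real.exp (q ^ (N - j))) :=
            Finset.prod_le_prod (fun j _ => by positivity) step
        _ = (∏ j ∈ range N, (q ^ j * r)) * ∏ j ∈ range N, Real.exp (q ^ (N - j)) :=
            Finset.prod_mul_distrib
        _ ≤ Real.exp ((N : ℝ) * x - L * ((N : ℝ) * ((N : ℝ) - 1) / 2)) *
              Real.exp (q / (1 - q)) := by
            rw [hprod_q, ← Real.exp_sum]
            apply mul_le_mul_of_nonneg_left ?_ (Real.exp_pos _).le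
            apply Real.exp_le_exp.2
            have hre : ∑ j ∈ range N, q ^ (N - j) = ∑ j ∈ range N, q ^ (j + 1) := by
              rw [← Finset.sum_range_reflect (fun j => q ^ (j + 1)) N]
              refine Finset.sum_congr rfl fun j hj => ?_
              have := mem_range.1 hj
              congr 1
              omega
            rw [hre]
            have : ∑ j ∈ range N, q ^ (j + 1) = q * ∑ j ∈ range N, q ^ j := by
              rw [Finset.mul_sum]
              exact Finset.sum_congr rfl fun j _ => by ring
            rw [this, div_eq_mul_inv]
            apply mul_le_mul_of_nonneg_left ?_ hq0.le
            calc ∑ j ∈ range N, q ^ j ≤ ∑' j : ℕ, q ^ j :=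
                  Summable.sum_le_tsum _ (fun i _ => by positivity)
                    (summable_geometric_of_lt_one hq0.le hq1)
              _ = (1 - q)⁻¹ := tsum_geometric_of_lt_one hq0.le hq1
    -- tail bound
    have htail : ∏ j ∈ Ico N n, (1 + q ^ j * r) ≤ Real.exp (1 / (q * (1 - q))) := by
      calc ∏ j ∈ Ico N n, (1 + q ^ j * r)
          ≤ ∏ j ∈ Ico N n, Real.exp (q ^ j * r) :=
            Finset.prod_le_prod (fun j _ => by positivity)
              (fun j _ => by linarith [Real.add_one_le_exp (q ^ j * r)])
        _ = Real.exp (∑ j ∈ Ico N n, q ^ j * r) := (Real.exp_sum _ _).symm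
        _ ≤ Real.exp (1 / (q * (1 - q))) := by
            apply Real.exp_le_exp.2
            calc ∑ j ∈ Ico N n, q ^ j * r
                ≤ ∑ j ∈ Ico N n, q ^ (j - N) * (1 / q) := by
                  refine Finset.sum_le_sum fun j hj => ?_
                  have hjN : N ≤ j := (Finset.mem_Ico.1 hj).1
                  have : q ^ j * r = q ^ (j - N) * (q ^ N * r) := by
                    rw [← mul_assoc, ← pow_add, Nat.sub_add_cancel hjN]
                  rw [this]
                  exact mul_le_mul_of_nonneg_left hqNr2 (by positivity)
              _ = ∑ j ∈ range (n - N), q ^ j * (1 / q) := by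
                  rw [Finset.sum_Ico_eq_sum_range]
                  refine Finset.sum_congr rfl fun j _ => ?_
                  congr 2
                  omega
              _ = (1 / q) * ∑ j ∈ range (n - N), q ^ j := by
                  rw [Finset.mul_sum]
                  exact Finset.sum_congr rfl fun j _ => by ring
              _ ≤ (1 / q) * (1 - q)⁻¹ := by
                  apply mul_le_mul_of_nonneg_left ?_ (by positivity)
                  calc ∑ j ∈ range (n - N), q ^ j ≤ ∑' j : ℕ, q ^ j :=
                        Summable.sum_le_tsum _ (fun i _ => by positivity)
                          (summable_geometric_of_lt_one hq0.le hq1)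
                    _ = (1 - q)⁻¹ := tsum_geometric_of_lt_one hq0.le hq1
              _ = 1 / (q * (1 - q)) := by rw [one_div, one_div, ← mul_inv]
    calc (∏ j ∈ range N, (1 + q ^ j * r)) * ∏ j ∈ Ico N n, (1 + q ^ j * r)
        ≤ (Real.exp ((N : ℝ) * x - L * ((N : ℝ) * ((N : ℝ) - 1) / 2)) *
            Real.exp (q / (1 - q))) * Real.exp (1 / (q * (1 - q))) :=
          mul_le_mul hhead htail
            (Finset.prod_nonneg fun j _ => by positivity) (by positivity)
      _ ≤ Real.exp (q / (1 - q) + 1 / (q * (1 - q))) *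
            Real.exp (x ^ 2 / (2 * L) + x / 2) := by
          rw [← Real.exp_add, ← Real.exp_add, ← Real.exp_add]
          exact Real.exp_le_exp.2 (by linarith)
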